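/- For n > 1, the product of 2 sin(kπ/n) over all k with 0 < k < n and gcd(k, n) = 1 equals p if n is a power of a prime p, and equals 1 otherwise. -/

import Mathlib

open Real

lemma abs_one_sub_exp {θ : ℝ} (h0 : 0 ≤ Real.sin (θ / 2)) :
    ‖1 - Complex.exp (θ * Complex.I)‖ = 2 * Real.sin (θ / 2) := by
  rw [Complex.exp_mul_I]
  have : (1 : ℂ) - (Complex.cos θ + Complex.sin θ * Complex.I) =
      Complex.ofReal (1 - Real.cos θ) + Complex.ofReal (-Real.sin θ) * Complex.I := by
    push_cast; ring
  rw [this, Complex.norm_def, Complex.normSq_add_mul_I]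
  have hc : Real.cos θ = 2 * Real.cos (θ / 2) ^ 2 - 1 := by
    have := Real.cos_two_mul (θ / 2)
    rwa [show 2 * (θ / 2) = θ by ring] at this
  have hs : (1 - Real.cos θ) ^ 2 + (-Real.sin θ) ^ 2 = (2 * Real.sin (θ / 2)) ^ 2 := by
    have h2 := Real.sin_sq_add_cos_sq θ
    have h3 := Real.sin_sq_add_cos_sq (θ / 2)
    nlinarith
  rw [hs]
  exact Real.sqrt_sq (by linarith)

lemma prod_two_sin_eq_abs_cyclotomic (n : ℕ) (hn : 1 < n) :
    (∏ k' ∈ (Finset.range n).filter (fun k' => 0 < k' ∧ Nat.Coprime k' n),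
        2 * Real.sin (k' * π / n)) = |((Polynomial.cyclotomic n ℝ).eval 1)| := by
  have hn0 : (0 : ℕ) < n := by omega
  set ζ : ℂ := Complex.exp (2 * ↑Real.pi * Complex.I / ↑n) with hζdef
  have hζ : IsPrimitiveRoot ζ n := Complex.isPrimitiveRoot_exp n hn0.ne'
  set S := (Finset.range n).filter (fun k' => 0 < k' ∧ Nat.Coprime k' n) with hS
  -- injectivity on S
  have hinj : Set.InjOn (fun k => ζ ^ k) S := by
    intro a ha b hb hab
    simp only [hS, Finset.coe_filter, Set.mem_setOf_eq, Finset.mem_range] at ha hb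
    exact hζ.pow_inj ha.1 hb.1 hab
  -- image is primitiveRoots
  have himg : S.image (fun k => ζ ^ k) = primitiveRoots n ℂ := by
    apply Finset.eq_of_subset_of_card_le
    · intro μ hμ
      simp only [Finset.mem_image] at hμ
      obtain ⟨k, hk, rfl⟩ := hμ
      simp only [hS, Finset.mem_filter, Finset.mem_range] at hk
      rw [mem_primitiveRoots hn0]
      exact (hζ.pow_iff_coprime hn0 k).mpr hk.2.2
    · rw [Finset.card_image_of_injOn hinj, hζ.card_primitiveRoots]
      have : S = (Finset.range n).filter n.Coprime := by
        ext k
        simp only [hS, Finset.mem_filter, Finset.mem_range]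
        constructor
        · rintro ⟨h1, h2, h3⟩; exact ⟨h1, h3.symm⟩
        · rintro ⟨h1, h2⟩
          refine ⟨h1, ?_, h2.symm⟩
          rcases Nat.eq_zero_or_pos k with rfl | hk
          · exact absurd (Nat.coprime_zero_right n |>.mp h2) (by omega)
          · exact hk
      rw [this, Nat.totient]
  -- evaluate cyclotomic at 1 over ℂ
  have heval : (Polynomial.cyclotomic n ℂ).eval 1 = ∏ k ∈ S, (1 - ζ ^ k) := by
    rw [Polynomial.cyclotomic_eq_prod_X_sub_primitiveRoots hζ, Polynomial.eval_prod, ← himg,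
      Finset.prod_image (fun a ha b hb => hinj ha hb)]
    simp
  -- relate ℝ and ℂ evaluations
  have hmap : (Polynomial.cyclotomic n ℂ).eval 1 =
      Complex.ofReal ((Polynomial.cyclotomic n ℝ).eval 1) := by
    have := Polynomial.cyclotomic.eval_apply (1 : ℝ) n (algebraMap ℝ ℂ)
    simpa using this
  have habs : ‖(Polynomial.cyclotomic n ℂ).eval 1‖ =
      |((Polynomial.cyclotomic n ℝ).eval 1)| := by
    rw [hmap, Complex.norm_real, Real.norm_eq_abs]
  rw [← habs, heval, norm_prod]
  apply Finset.prod_congr rfl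
  intro k hk
  simp only [hS, Finset.mem_filter, Finset.mem_range] at hk
  have hθ : ζ ^ k = Complex.exp ((2 * Real.pi * k / n : ℝ) * Complex.I) := by
    rw [hζdef, ← Complex.exp_nat_mul]
    congr 1
    push_cast
    ring
  rw [hθ, abs_one_sub_exp]
  · congr 1
    ring
  · have h1 : (0:ℝ) < k * Real.pi / n := by
      apply div_pos (mul_pos (by exact_mod_cast hk.2.1) Real.pi_pos) (by exact_mod_cast hn0)
    have h2 : (k : ℝ) * Real.pi / n < Real.pi := by
      rw [div_lt_iff₀ (by exact_mod_cast hn0)]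
      have : (k : ℝ) < n := by exact_mod_cast hk.1
      nlinarith [Real.pi_pos]
    have : (2 * Real.pi * k / n : ℝ) / 2 = k * Real.pi / n := by ring
    rw [this]
    exact le_of_lt (Real.sin_pos_of_pos_of_lt_pi h1 h2)

theorem prod_two_sin (n : ℕ) (hn : 1 < n) :
    (∀ p k : ℕ, p.Prime → 0 < k → n = p ^ k →
      (∏ k' ∈ (Finset.range n).filter (fun k' => 0 < k' ∧ Nat.Coprime k' n),
        2 * Real.sin (k' * π / n)) = p) ∧
    (¬ IsPrimePow n →
      (∏ k' ∈ (Finset.range n).filter (fun k' => 0 < k' ∧ Nat.Coprime k' n),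
        2 * Real.sin (k' * π / n)) = 1) := by
  constructor
  · rintro p k hp hk rfl
    rw [prod_two_sin_eq_abs_cyclotomic _ hn]
    obtain ⟨m, rfl⟩ : ∃ m, k = m + 1 := ⟨k - 1, by omega⟩
    haveI : Fact p.Prime := ⟨hp⟩
    rw [Polynomial.eval_one_cyclotomic_prime_pow]
    simp [abs_of_nonneg, hp.pos.le]
  · intro h
    rw [prod_two_sin_eq_abs_cyclotomic _ hn]
    rw [Polynomial.eval_one_cyclotomic_not_prime_pow]
    · simp
    · intro p hp k hpk
      apply h
      rcases Nat.eq_zero_or_pos k with rfl | hk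
      · simp at hpk; omega
      · exact ⟨p, k, hp.prime, hk, hpk⟩
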